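/- Let A be a finite-dimensional commutative Frobenius algebra with nondegenerate multiplication-invariant forms g and g̃ related by g̃(x,y) = g(z*x, y) for an invertible z ∈ A. Let H and H̃ be the socle elements of g and g̃ respectively (H = ∑ x_i * x̃_i for g-dual bases, H̃ = ∑ y_i * ỹ_i for g̃-dual bases). Then H = z * H̃. -/

import Mathlib

/-- Comparison of socle elements of two metrics on a commutative Frobenius
algebra: if g̃(x,y) = g(z*x,y) with z invertible, then H = z * H̃. -/
theorem socle_elements_comparison (m : ℕ) (A : Type*) [CommRing A] [Algebra ℂ A]
    [FiniteDimensional ℂ A]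
    (g gt : A →ₗ[ℂ] A →ₗ[ℂ] ℂ)
    (hsym : ∀ x y : A, g x y = g y x) (hsymt : ∀ x y : A, gt x y = gt y x)
    (hinv : ∀ x y z : A, g (x * y) z = g x (y * z))
    (hinvt : ∀ x y z : A, gt (x * y) z = gt x (y * z))
    (hnd : ∀ x : A, (∀ y : A, g x y = 0) → x = 0)
    (z : A) (hz : IsUnit z) (hrel : ∀ x y : A, gt x y = g (z * x) y)
    (b b' : Module.Basis (Fin m) ℂ A) (xt yt : Fin m → A)
    (hb : ∀ i j, g (b i) (xt j) = if i = j then 1 else 0)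
    (hb' : ∀ i j, gt (b' i) (yt j) = if i = j then 1 else 0) :
    ∑ i, b i * xt i = z * ∑ i, b' i * yt i := by
  obtain ⟨zu, hzu⟩ := hz
  -- every x is ∑ g x (xt i) • b i
  have claimA : ∀ x : A, ∑ i, g x (xt i) • b i = x := by
    intro x
    conv_rhs => rw [← b.sum_repr x]
    refine Finset.sum_congr rfl fun i _ => ?_
    congr 1
    conv_lhs => rw [← b.sum_repr x]
    rw [map_sum, LinearMap.sum_apply]
    simp [hb, Finset.sum_ite_eq']
  -- dual expansions of xt i in terms of yt
  have claimB : ∀ i, ∑ j, g (z * b' j) (xt i) • yt j = xt i := by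
    intro i
    have hd : ∀ y : A, g ((∑ j, g (z * b' j) (xt i) • yt j) - xt i) y = 0 := by
      intro y
      have hy : y = ∑ k, b'.repr ((↑zu⁻¹ : A) * y) k • (z * b' k) := by
        have h1 : ((↑zu⁻¹ : A) * y) = ∑ k, b'.repr ((↑zu⁻¹ : A) * y) k • b' k :=
          (b'.sum_repr _).symm
        calc y = z * ((↑zu⁻¹ : A) * y) := by
                  rw [← mul_assoc, ← hzu, Units.mul_inv, one_mul]
          _ = ∑ k, b'.repr ((↑zu⁻¹ : A) * y) k • (z * b' k) := by
                  conv_lhs => rw [h1, Finset.mul_sum]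
                  exact Finset.sum_congr rfl fun k _ => (mul_smul_comm _ _ _)
      rw [hy, map_sum]
      refine Finset.sum_eq_zero fun k _ => ?_
      rw [map_smul, smul_eq_mul]
      have : g ((∑ j, g (z * b' j) (xt i) • yt j) - xt i) (z * b' k) = 0 := by
        rw [map_sub, LinearMap.sub_apply, map_sum, LinearMap.sum_apply]
        have hterm : ∀ j, (g (z * b' j) (xt i) • g (yt j)) (z * b' k)
            = g (z * b' j) (xt i) * (if k = j then 1 else 0) := by
          intro j
          rw [LinearMap.smul_apply, smul_eq_mul]
          congr 1
          rw [hsym, ← hrel, hb']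
        simp only [map_smul, hterm]
        simp only [mul_ite, mul_one, mul_zero]
        rw [Finset.sum_ite_eq (Finset.univ : Finset (Fin m)) k
          (fun j => g (z * b' j) (xt i))]
        simp [hsym (xt i) (z * b' k)]
      rw [this, mul_zero]
    exact sub_eq_zero.mp (hnd _ hd)
  have key : ∑ j, (z * b' j) * yt j = ∑ i, b i * xt i := by
    calc ∑ j, (z * b' j) * yt j
        = ∑ j, (∑ i, g (z * b' j) (xt i) • b i) * yt j := by
          exact Finset.sum_congr rfl fun j _ => by rw [claimA (z * b' j)]
      _ = ∑ j, ∑ i, g (z * b' j) (xt i) • (b i * yt j) := by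
          exact Finset.sum_congr rfl fun j _ => by
            rw [Finset.sum_mul]
            exact Finset.sum_congr rfl fun i _ => smul_mul_assoc _ _ _
      _ = ∑ i, ∑ j, g (z * b' j) (xt i) • (b i * yt j) := Finset.sum_comm
      _ = ∑ i, b i * ∑ j, g (z * b' j) (xt i) • yt j := by
          exact Finset.sum_congr rfl fun i _ => by
            rw [Finset.mul_sum]
            exact Finset.sum_congr rfl fun j _ => (mul_smul_comm _ _ _).symm
      _ = ∑ i, b i * xt i := by
          exact Finset.sum_congr rfl fun i _ => by rw [claimB i]
  rw [← key, Finset.mul_sum]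
  exact Finset.sum_congr rfl fun j _ => (mul_assoc _ _ _)
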